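/- Let W^NR be the set of women whose individual push-up by man m causes no regret. Then for any subset Y ⊆ W^NR, pushing up the entire set Y simultaneously also causes no regret for m: the resulting DA matching still assigns μ(m) to m. -/

import Mathlib

/-- A stable marriage profile: `M m` is man `m`'s ranking of women
(`M m k` = his `k`-th favorite woman), `W w` is woman `w`'s ranking of men. -/
structure Profile (n : ℕ) where
  M : Fin n → (Fin n ≃ Fin n)
  W : Fin n → (Fin n ≃ Fin n)

/-- Man `m` strictly prefers woman `w₁` to woman `w₂`. -/
def Profile.mpref {n : ℕ} (P : Profile n) (m w₁ w₂ : Fin n) : Prop :=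
  (P.M m).symm w₁ < (P.M m).symm w₂

/-- Woman `w` strictly prefers man `m₁` to man `m₂`. -/
def Profile.wpref {n : ℕ} (P : Profile n) (w m₁ m₂ : Fin n) : Prop :=
  (P.W w).symm m₁ < (P.W w).symm m₂

/-- State of the Gale–Shapley (deferred acceptance) algorithm:
`next m` is the rank of the next woman `m` will propose to, `wmatch w` is the man
currently (tentatively) held by woman `w`, `props` records all proposals made so far. -/
structure GSState (n : ℕ) where
  next : Fin n → ℕ
  wmatch : Fin n → Option (Fin n)
  props : List (Fin n × Fin n)

/-- Man `m` is currently not held by any woman. -/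
def isUnmatched {n : ℕ} (s : GSState n) (m : Fin n) : Bool :=
  decide (∀ w, s.wmatch w ≠ some m)

/-- One step of men-proposing deferred acceptance: the first unmatched man
proposes to the next woman on his list; she keeps her favorite proposer so far. -/
def GSstep {n : ℕ} (P : Profile n) (s : GSState n) : GSState n :=
  match (List.finRange n).find? (fun m => isUnmatched s m && decide (s.next m < n)) with
  | none => s
  | some m =>
    if h : s.next m < n then
      let w := P.M m ⟨s.next m, h⟩
      let s' : GSState n :=
        { next := Function.update s.next m (s.next m + 1),
          wmatch := s.wmatch,
          props := (m, w) :: s.props }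
      match s.wmatch w with
      | none => { s' with wmatch := Function.update s.wmatch w (some m) }
      | some m' =>
          if (P.W w).symm m < (P.W w).symm m' then
            { s' with wmatch := Function.update s.wmatch w (some m) }
          else s'
    else s

def GSinit (n : ℕ) : GSState n := ⟨fun _ => 0, fun _ => none, []⟩

/-- Run deferred acceptance to completion (at most `n*n` proposals occur). -/
def GSrun {n : ℕ} (P : Profile n) : GSState n := (GSstep P)^[n * n + 1] (GSinit n)

/-- The men-proposing deferred acceptance matching, as a map from men to women. -/
noncomputable def DA {n : ℕ} (P : Profile n) : Fin n → Fin n :=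
  fun m => if h : ∃ w, (GSrun P).wmatch w = some m then h.choose else m

/-- Man `m` proposes to woman `w` during the run of deferred acceptance on `P`. -/
def Proposes {n : ℕ} (P : Profile n) (m w : Fin n) : Prop :=
  (m, w) ∈ (GSrun P).props

/-- `(m, w)` is a blocking pair for the matching `μ` (men to women) w.r.t. profile `P`. -/
def Blocks {n : ℕ} (P : Profile n) (μ : Fin n → Fin n) (m w : Fin n) : Prop :=
  P.mpref m w (μ m) ∧ ∃ m', μ m' = w ∧ P.wpref w m m'

/-- `μ` is a stable matching with respect to profile `P`. -/
def Stable {n : ℕ} (P : Profile n) (μ : Fin n → Fin n) : Prop :=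
  Function.Bijective μ ∧ ∀ m w, ¬ Blocks P μ m w

/-- Replace man `m`'s preference list by `e`. -/
def Profile.updateM {n : ℕ} (P : Profile n) (m : Fin n) (e : Fin n ≃ Fin n) : Profile n :=
  { P with M := Function.update P.M m e }

/-- Replace woman `w`'s preference list by `e`. -/
def Profile.updateW {n : ℕ} (P : Profile n) (w : Fin n) (e : Fin n ≃ Fin n) : Profile n :=
  { P with W := Function.update P.W w e }

/-- The set of women ranked strictly above `w₀` in the list `e`. -/
def Above {n : ℕ} (e : Fin n ≃ Fin n) (w₀ : Fin n) : Set (Fin n) :=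
  {w | e.symm w < e.symm w₀}

/-- The set of women ranked strictly below `w₀` in the list `e`. -/
def Below {n : ℕ} (e : Fin n ≃ Fin n) (w₀ : Fin n) : Set (Fin n) :=
  {w | e.symm w₀ < e.symm w}

/-- `e'` is obtained from man `m`'s true list by pushing up the set `X` and pushing
down the set `Y` around the pivot `DA P m` (the order of women above and below
the pivot is immaterial, cf. Proposition 2 of the paper). -/
def PushUpDown {n : ℕ} (P : Profile n) (m : Fin n) (X Y : Set (Fin n))
    (e' : Fin n ≃ Fin n) : Prop :=
  Above e' (DA P m) = (Above (P.M m) (DA P m) ∪ X) \ Y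

/-- `e'` is obtained from `m`'s true list by pushing up the set `X` above `DA P m`. -/
def PushUp {n : ℕ} (P : Profile n) (m : Fin n) (X : Set (Fin n))
    (e' : Fin n ≃ Fin n) : Prop :=
  PushUpDown P m X ∅ e'

/-- `e'` is obtained from `m`'s true list by pushing down the set `Y` below `DA P m`. -/
def PushDown {n : ℕ} (P : Profile n) (m : Fin n) (Y : Set (Fin n))
    (e' : Fin n ≃ Fin n) : Prop :=
  PushUpDown P m ∅ Y e'

/-- Woman `w` is ranked below `DA P m` in `m`'s true list, and pushing her up
individually leaves `m`'s deferred acceptance partner unchanged (no regret). -/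
def NoRegretWoman {n : ℕ} (P : Profile n) (m w : Fin n) : Prop :=
  w ∈ Below (P.M m) (DA P m) ∧
    ∀ e' : Fin n ≃ Fin n, PushUp P m {w} e' → DA (P.updateM m e') m = DA P m

/-- The no-regret set `W^NR` of accomplice `m`. -/
def WNR {n : ℕ} (P : Profile n) (m : Fin n) : Set (Fin n) :=
  {w | NoRegretWoman P m w}

section GS
variable {n : ℕ}

/-- The selected (first unmatched, non-exhausted) man. -/
def sel (s : GSState n) : Option (Fin n) :=
  (List.finRange n).find? (fun m => isUnmatched s m && decide (s.next m < n))

lemma sel_none_spec {s : GSState n} (h : sel s = none) (m : Fin n) :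
    ¬ ((∀ w, s.wmatch w ≠ some m) ∧ s.next m < n) := by
  have hh := List.find?_eq_none.mp h m (List.mem_finRange m)
  rintro ⟨h1, h2⟩
  apply hh
  simp [isUnmatched, h1, h2]

lemma sel_some_spec {s : GSState n} {m : Fin n} (h : sel s = some m) :
    (∀ w, s.wmatch w ≠ some m) ∧ s.next m < n := by
  have := List.find?_some h
  simp only [Bool.and_eq_true, decide_eq_true_eq, isUnmatched] at this
  exact ⟨this.1, this.2⟩

lemma GSstep_of_sel_none {P : Profile n} {s : GSState n} (h : sel s = none) :
    GSstep P s = s := by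
  unfold GSstep
  rw [show ((List.finRange n).find? (fun m => isUnmatched s m && decide (s.next m < n))) = none from h]

/-- Characterization of one step of the algorithm. -/
lemma step_cases (P : Profile n) (s : GSState n) :
    (sel s = none ∧ GSstep P s = s) ∨
    ∃ (m : Fin n) (h : s.next m < n), sel s = some m ∧ (∀ w', s.wmatch w' ≠ some m) ∧
      (GSstep P s).next = Function.update s.next m (s.next m + 1) ∧
      ((∃ m', s.wmatch (P.M m ⟨s.next m, h⟩) = some m' ∧
          ¬ ((P.W (P.M m ⟨s.next m, h⟩)).symm m < (P.W (P.M m ⟨s.next m, h⟩)).symm m') ∧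
          (GSstep P s).wmatch = s.wmatch)
       ∨ ((s.wmatch (P.M m ⟨s.next m, h⟩) = none ∨ ∃ m', s.wmatch (P.M m ⟨s.next m, h⟩) = some m' ∧
            (P.W (P.M m ⟨s.next m, h⟩)).symm m < (P.W (P.M m ⟨s.next m, h⟩)).symm m') ∧
          (GSstep P s).wmatch = Function.update s.wmatch (P.M m ⟨s.next m, h⟩) (some m))) := by
  rcases hsel : sel s with _ | m
  · exact Or.inl ⟨rfl, GSstep_of_sel_none hsel⟩
  · obtain ⟨hun, hlt⟩ := sel_some_spec hsel
    refine Or.inr ⟨m, hlt, rfl, hun, ?_⟩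
    unfold GSstep
    rw [show ((List.finRange n).find? (fun m => isUnmatched s m && decide (s.next m < n))) = some m from hsel]
    dsimp only
    rw [dif_pos hlt]
    rcases hw : s.wmatch (P.M m ⟨s.next m, hlt⟩) with _ | m'
    · exact ⟨rfl, Or.inr ⟨Or.inl rfl, rfl⟩⟩
    · dsimp only
      by_cases hpref : (P.W (P.M m ⟨s.next m, hlt⟩)).symm m < (P.W (P.M m ⟨s.next m, hlt⟩)).symm m'
      · rw [if_pos hpref]; exact ⟨rfl, Or.inr ⟨Or.inr ⟨m', rfl, hpref⟩, rfl⟩⟩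
      · rw [if_neg hpref]; exact ⟨rfl, Or.inl ⟨m', rfl, hpref, rfl⟩⟩

end GS
section GS2
variable {n : ℕ}

/-- The iterates of the algorithm. -/
def iter (P : Profile n) (k : ℕ) : GSState n := (GSstep P)^[k] (GSinit n)

lemma iter_succ (P : Profile n) (k : ℕ) : iter P (k + 1) = GSstep P (iter P k) := by
  simp [iter, Function.iterate_succ_apply']

lemma GSrun_eq_iter (P : Profile n) : GSrun P = iter P (n * n + 1) := rfl

/-- The main invariant of the algorithm. -/
structure GSInv (P : Profile n) (s : GSState n) : Prop where
  i1 : ∀ m, s.next m ≤ n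
  i2 : ∀ w m, s.wmatch w = some m → ((P.M m).symm w : ℕ) < s.next m
  i3 : ∀ w w' m, s.wmatch w = some m → s.wmatch w' = some m → w = w'
  i4 : ∀ m w, ((P.M m).symm w : ℕ) < s.next m →
        s.wmatch w = some m ∨ ∃ m', s.wmatch w = some m' ∧ (P.W w).symm m' < (P.W w).symm m
  i5 : ∀ ν, Stable P ν → ∀ m, ((P.M m).symm (ν m) : ℕ) < s.next m → s.wmatch (ν m) = some m

lemma inv_init (P : Profile n) : GSInv P (GSinit n) := by
  constructor <;> intros <;> simp_all [GSinit]

lemma inv_step (P : Profile n) (s : GSState n) (hs : GSInv P s) : GSInv P (GSstep P s) := by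
  rcases step_cases P s with ⟨-, heq⟩ | ⟨m, h, -, hun, hnext, hcase⟩
  · rwa [heq]
  · set w : Fin n := P.M m ⟨s.next m, h⟩ with hw
    have hrankw : ((P.M m).symm w : ℕ) = s.next m := by rw [hw, Equiv.symm_apply_apply]
    have hxw : ∀ x : Fin n, ((P.M m).symm x : ℕ) = s.next m → x = w := by
      intro x hx
      have hthis : (P.M m).symm x = ⟨s.next m, h⟩ := Fin.ext hx
      have h2 := congrArg (P.M m) hthis
      rw [Equiv.apply_symm_apply] at h2
      rw [h2, ← hw]
    have hnext_self : (GSstep P s).next m = s.next m + 1 := by rw [hnext]; simp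
    have hnext_other : ∀ m', m' ≠ m → (GSstep P s).next m' = s.next m' := by
      intro m' hm'; rw [hnext]; simp [Function.update_of_ne hm']
    have hnext_le : ∀ m', s.next m' ≤ (GSstep P s).next m' := by
      intro m'
      by_cases hm : m' = m
      · subst hm; rw [hnext_self]; omega
      · rw [hnext_other m' hm]
    have hwm_other : ∀ w', w' ≠ w → (GSstep P s).wmatch w' = s.wmatch w' := by
      intro w' hw'
      rcases hcase with ⟨m', -, -, hm⟩ | ⟨-, hm⟩
      · rw [hm]
      · rw [hm]; simp [Function.update_of_ne hw']
    -- dichotomy for the proposed woman w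
    have hwm_w : (∃ m', s.wmatch w = some m' ∧ (GSstep P s).wmatch w = some m' ∧
          ¬ ((P.W w).symm m < (P.W w).symm m') ∧ m' ≠ m) ∨
        ((GSstep P s).wmatch w = some m ∧
          (s.wmatch w = none ∨ ∃ m', s.wmatch w = some m' ∧ (P.W w).symm m < (P.W w).symm m')) := by
      rcases hcase with ⟨m', h1, h2, hm⟩ | ⟨hacc, hm⟩
      · exact Or.inl ⟨m', h1, by rw [hm]; exact h1, h2, fun he => hun w (he ▸ h1)⟩
      · exact Or.inr ⟨by rw [hm]; simp, hacc⟩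
    constructor
    · -- i1
      intro m'
      by_cases hm : m' = m
      · subst hm; rw [hnext_self]; omega
      · rw [hnext_other m' hm]; exact hs.i1 m'
    · -- i2
      intro w'' m'' hmt
      by_cases hww : w'' = w
      · subst hww
        rcases hwm_w with ⟨m', h1, h2, -, -⟩ | ⟨h2, -⟩
        · rw [h2] at hmt
          obtain rfl : m' = m'' := by injection hmt
          exact lt_of_lt_of_le (hs.i2 _ _ h1) (hnext_le _)
        · rw [h2] at hmt
          obtain rfl : m = m'' := by injection hmt
          rw [hnext_self, hrankw]; omega
      · rw [hwm_other w'' hww] at hmt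
        exact lt_of_lt_of_le (hs.i2 _ _ hmt) (hnext_le _)
    · -- i3
      intro w1 w2 m0 h1 h2
      by_cases hw1 : w1 = w <;> by_cases hw2 : w2 = w
      · rw [hw1, hw2]
      · subst hw1
        rcases hwm_w with ⟨m', ho1, ho2, -, -⟩ | ⟨ho2, -⟩
        · rw [ho2] at h1; obtain rfl : m' = m0 := by injection h1
          rw [hwm_other w2 hw2] at h2
          exact hs.i3 _ _ _ ho1 h2
        · rw [ho2] at h1; obtain rfl : m = m0 := by injection h1
          rw [hwm_other w2 hw2] at h2
          exact absurd h2 (hun _)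
      · subst hw2
        rcases hwm_w with ⟨m', ho1, ho2, -, -⟩ | ⟨ho2, -⟩
        · rw [ho2] at h2; obtain rfl : m' = m0 := by injection h2
          rw [hwm_other w1 hw1] at h1
          exact hs.i3 _ _ _ h1 ho1
        · rw [ho2] at h2; obtain rfl : m = m0 := by injection h2
          rw [hwm_other w1 hw1] at h1
          exact absurd h1 (hun _)
      · rw [hwm_other w1 hw1] at h1; rw [hwm_other w2 hw2] at h2
        exact hs.i3 _ _ _ h1 h2
    · -- i4
      intro m'' w'' hmt
      have key : ((P.M m'').symm w'' : ℕ) < s.next m'' ∨ (m'' = m ∧ w'' = w) := by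
        by_cases hm : m'' = m
        · subst hm
          rw [hnext_self] at hmt
          rcases Nat.lt_succ_iff_lt_or_eq.mp hmt with h' | h'
          · exact Or.inl h'
          · exact Or.inr ⟨rfl, hxw w'' h'⟩
        · rw [hnext_other m'' hm] at hmt; exact Or.inl hmt
      rcases key with hlt | ⟨heq, heqw⟩
      · rcases hs.i4 m'' w'' hlt with hold | ⟨m', hold, hpref⟩
        · -- previously held by m''
          by_cases hww : w'' = w
          · subst hww
            rcases hwm_w with ⟨m', h1, h2, -, -⟩ | ⟨h2, hacc⟩
            · rw [hold] at h1; obtain rfl : m'' = m' := by injection h1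
              exact Or.inl h2
            · rcases hacc with hnone | ⟨m', h1, hpref⟩
              · rw [hold] at hnone; cases hnone
              · rw [hold] at h1; obtain rfl : m'' = m' := by injection h1
                exact Or.inr ⟨m, h2, hpref⟩
          · rw [hwm_other w'' hww]; exact Or.inl hold
        · -- previously held by better m'
          by_cases hww : w'' = w
          · subst hww
            rcases hwm_w with ⟨m1, h1, h2, -, -⟩ | ⟨h2, hacc⟩
            · rw [hold] at h1; obtain rfl : m' = m1 := by injection h1
              exact Or.inr ⟨m', h2, hpref⟩
            · rcases hacc with hnone | ⟨m1, h1, hpref2⟩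
              · rw [hold] at hnone; cases hnone
              · rw [hold] at h1; obtain rfl : m' = m1 := by injection h1
                exact Or.inr ⟨m, h2, lt_trans hpref2 hpref⟩
          · rw [hwm_other w'' hww]; exact Or.inr ⟨m', hold, hpref⟩
      · -- the new proposal (m, w)
        subst heq; subst heqw
        rcases hwm_w with ⟨m', h1, h2, hnp, hne⟩ | ⟨h2, -⟩
        · refine Or.inr ⟨m', h2, ?_⟩
          rcases lt_or_eq_of_le (not_lt.mp hnp) with h' | h'
          · exact h'
          · exact absurd ((P.W w).symm.injective h') hne
        · exact Or.inl h2
    · -- i5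
      intro ν hν m'' hmt
      have hinj := hν.1.injective
      have key : ((P.M m'').symm (ν m'') : ℕ) < s.next m'' ∨ (m'' = m ∧ ν m'' = w) := by
        by_cases hm : m'' = m
        · subst hm
          rw [hnext_self] at hmt
          rcases Nat.lt_succ_iff_lt_or_eq.mp hmt with h' | h'
          · exact Or.inl h'
          · exact Or.inr ⟨rfl, hxw _ h'⟩
        · rw [hnext_other m'' hm] at hmt; exact Or.inl hmt
      -- m has not yet proposed to ν m (otherwise he'd be matched to her)
      have hm_not : ∀ hlt' : ((P.M m).symm (ν m) : ℕ) < s.next m, False := fun hlt' =>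
        hun (ν m) (hs.i5 ν hν m hlt')
      rcases key with hlt | ⟨heq, hvm⟩
      · have hold := hs.i5 ν hν m'' hlt
        by_cases hww : ν m'' = w
        · rw [hww] at hold ⊢
          have hmm : m'' ≠ m := fun he => hun w (he ▸ hold)
          rcases hwm_w with ⟨m', h1, h2, -, -⟩ | ⟨h2, hacc⟩
          · rw [hold] at h1; obtain rfl : m'' = m' := by injection h1
            exact h2
          · -- w accepted m, dumping m'' : this would make (m, w) block ν
            exfalso
            rcases hacc with hnone | ⟨m', h1, hpref⟩
            · rw [hold] at hnone; cases hnone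
            rw [hold] at h1; obtain rfl : m'' = m' := by injection h1
            -- derive the blocking pair (m, w) of ν
            have hmpref : P.mpref m w (ν m) := by
              have h1' : ¬ ((P.M m).symm (ν m) : ℕ) < s.next m := fun hc => hm_not hc
              have h2' : ((P.M m).symm (ν m) : ℕ) ≠ s.next m := by
                intro hc
                exact hmm (hinj (by rw [hxw _ hc, hww])).symm
              have : s.next m < ((P.M m).symm (ν m) : ℕ) := by omega
              exact Fin.lt_def.mpr (by rw [hrankw]; exact this)
            exact hν.2 m w ⟨hmpref, m'', hww, hpref⟩
        · rw [hwm_other _ hww]; exact hold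
      · -- m'' = m and ν m = w : show w accepts m
        rw [heq] at hvm ⊢
        rcases hwm_w with ⟨m', h1, h2, hnp, hne⟩ | ⟨h2, -⟩
        · -- w kept m' ≻ m : blocking pair (m', w) for ν
          exfalso
          have hm'rank : ((P.M m').symm w : ℕ) < s.next m' := hs.i2 w m' h1
          have hmpref : P.mpref m' w (ν m') := by
            have h1' : ¬ ((P.M m').symm (ν m') : ℕ) < s.next m' := by
              intro hc
              have := hs.i5 ν hν m' hc
              have := hs.i3 _ _ _ this h1
              exact hne (hinj (by rw [this, hvm]))
            exact Fin.lt_def.mpr (by omega)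
          have hwpref : P.wpref w m' m := by
            rcases lt_or_eq_of_le (not_lt.mp hnp) with h' | h'
            · exact h'
            · exact absurd ((P.W w).symm.injective h') hne
          exact hν.2 m' w ⟨hmpref, m, hvm, hwpref⟩
        · rw [hvm]; exact h2
section GS3
variable {n : ℕ}

lemma inv_iter (P : Profile n) (k : ℕ) : GSInv P (iter P k) := by
  induction k with
  | zero => exact inv_init P
  | succ k ih => rw [iter_succ]; exact inv_step P _ ih

lemma next_mono (P : Profile n) {k j : ℕ} (hkj : k ≤ j) (m : Fin n) :
    (iter P k).next m ≤ (iter P j).next m := by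
  induction j with
  | zero =>
    have hk0 : k = 0 := by omega
    subst hk0; exact le_refl _
  | succ j ih =>
    rcases Nat.lt_or_ge k (j+1) with hk | hk
    · have h1 : (iter P k).next m ≤ (iter P j).next m := ih (by omega)
      refine le_trans h1 ?_
      rw [iter_succ]
      rcases step_cases P (iter P j) with ⟨-, heq⟩ | ⟨m₁, h, -, -, hnext, -⟩
      · rw [heq]
      · rw [hnext]
        by_cases hm : m = m₁
        · subst hm; simp
        · simp [Function.update_of_ne hm]
    · obtain rfl : k = j + 1 := by omega
      rfl

lemma holder_mono (P : Profile n) {k j : ℕ} (hkj : k ≤ j) {w m : Fin n}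
    (hm : (iter P k).wmatch w = some m) :
    ∃ m', (iter P j).wmatch w = some m' ∧ (P.W w).symm m' ≤ (P.W w).symm m := by
  induction j with
  | zero =>
    obtain rfl : k = 0 := by omega
    exact ⟨m, hm, le_refl _⟩
  | succ j ih =>
    rcases Nat.lt_or_ge k (j+1) with hk | hk
    · obtain ⟨m', hm', hle⟩ := ih (by omega)
      rw [iter_succ]
      rcases step_cases P (iter P j) with ⟨-, heq⟩ | ⟨m₁, h, -, -, -, hcase⟩
      · rw [heq]; exact ⟨m', hm', hle⟩
      · rcases hcase with ⟨m₂, -, -, heqw⟩ | ⟨hacc, heqw⟩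
        · rw [heqw]; exact ⟨m', hm', hle⟩
        · by_cases hww : w = P.M m₁ ⟨(iter P j).next m₁, h⟩
          · rcases hacc with hnone | ⟨m₂, holdm, hpref⟩
            · rw [← hww] at hnone; rw [hnone] at hm'; cases hm'
            · rw [← hww] at holdm hpref; rw [holdm] at hm'
              obtain rfl : m₂ = m' := by injection hm'
              refine ⟨m₁, ?_, le_trans (le_of_lt hpref) hle⟩
              rw [heqw, ← hww]; simp
          · rw [heqw, Function.update_of_ne hww]; exact ⟨m', hm', hle⟩
    · obtain rfl : k = j + 1 := by omega
      exact ⟨m, hm, le_refl _⟩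

lemma matched_persists (P : Profile n) {k j : ℕ} (hkj : k ≤ j) {w : Fin n}
    (hm : ∃ m, (iter P k).wmatch w = some m) : ∃ m, (iter P j).wmatch w = some m := by
  obtain ⟨m, hm⟩ := hm
  obtain ⟨m', hm', -⟩ := holder_mono P hkj hm
  exact ⟨m', hm'⟩

/-- A rejected man never gets this woman again. -/
lemma rejected_forever (P : Profile n) {k j : ℕ} (hkj : k ≤ j) {w m : Fin n}
    (hrank : ((P.M m).symm w : ℕ) < (iter P k).next m)
    (hnot : (iter P k).wmatch w ≠ some m) : (iter P j).wmatch w ≠ some m := by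
  rcases (inv_iter P k).i4 m w hrank with hold | ⟨m', hold, hlt⟩
  · exact absurd hold hnot
  · obtain ⟨m'', hm'', hle⟩ := holder_mono P hkj hold
    rw [hm'']
    intro hc
    obtain rfl : m'' = m := by injection hc
    exact absurd (lt_of_le_of_lt hle hlt) (lt_irrefl _)

/-- Every proposal happens at a unique, identifiable step. -/
lemma prop_step (P : Profile n) : ∀ (j : ℕ) (m : Fin n) (v : ℕ),
    v < (iter P j).next m →
    ∃ k, k < j ∧ sel (iter P k) = some m ∧ (iter P k).next m = v := by
  intro j
  induction j with
  | zero => intro m v hv; simp [iter, GSinit] at hv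
  | succ j ih =>
    intro m v hv
    rw [iter_succ] at hv
    rcases step_cases P (iter P j) with ⟨-, heq⟩ | ⟨m₁, h, hsel, -, hnext, -⟩
    · rw [heq] at hv
      obtain ⟨k, hk, h1, h2⟩ := ih m v hv
      exact ⟨k, by omega, h1, h2⟩
    · rw [hnext] at hv
      by_cases hm : m = m₁
      · subst hm
        rw [Function.update_self] at hv
        rcases Nat.lt_succ_iff_lt_or_eq.mp hv with h' | h'
        · obtain ⟨k, hk, h1, h2⟩ := ih m v h'
          exact ⟨k, by omega, h1, h2⟩
        · exact ⟨j, by omega, hsel, h'.symm⟩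
      · rw [Function.update_of_ne hm] at hv
        obtain ⟨k, hk, h1, h2⟩ := ih m v hv
        exact ⟨k, by omega, h1, h2⟩

lemma sel_none_frozen (P : Profile n) {k j : ℕ} (hkj : k ≤ j) (h : sel (iter P k) = none) :
    iter P j = iter P k := by
  induction j with
  | zero =>
    have hk0 : k = 0 := by omega
    subst hk0; rfl
  | succ j ih =>
    rcases Nat.lt_or_ge k (j+1) with hk | hk
    · have hj := ih (by omega)
      rw [iter_succ, hj]
      exact GSstep_of_sel_none h
    · have hk0 : k = j + 1 := by omega
      subst hk0; rfl

lemma total_bound (P : Profile n) (k : ℕ) :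
    (∀ j < k, sel (iter P j) ≠ none) → k ≤ ∑ m : Fin n, (iter P k).next m := by
  induction k with
  | zero => intro _; omega
  | succ k ih =>
    intro hall
    have hk := ih (fun j hj => hall j (by omega))
    have hsel : sel (iter P k) ≠ none := hall k (by omega)
    rcases hs : sel (iter P k) with _ | m₁
    · exact absurd hs hsel
    rcases step_cases P (iter P k) with ⟨hnone, -⟩ | ⟨m₂, h, hsel2, -, hnext, -⟩
    · rw [hnone] at hs; cases hs
    · have hsum : ∑ m : Fin n, (iter P (k+1)).next m
          = (∑ m : Fin n, (iter P k).next m) + 1 := by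
        rw [iter_succ]
        rw [show (GSstep P (iter P k)).next = Function.update (iter P k).next m₂ ((iter P k).next m₂ + 1) by
          rw [hnext]]
        rw [Finset.sum_update_of_mem (Finset.mem_univ m₂), Finset.sdiff_singleton_eq_erase]
        rw [← Finset.sum_erase_add Finset.univ (iter P k).next (Finset.mem_univ m₂)]
        omega
      omega

lemma sel_run_none (P : Profile n) : sel (iter P (n * n + 1)) = none := by
  by_cases hex : ∃ k < n * n + 1, sel (iter P k) = none
  · obtain ⟨k, hk, hnone⟩ := hex
    rw [sel_none_frozen P (by omega : k ≤ n * n + 1) hnone]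
    exact hnone
  · push_neg at hex
    have := total_bound P (n * n + 1) hex
    have hle : ∑ m : Fin n, (iter P (n * n + 1)).next m ≤ n * n := by
      calc ∑ m : Fin n, (iter P (n * n + 1)).next m ≤ ∑ _m : Fin n, n :=
        Finset.sum_le_sum (fun m _ => (inv_iter P (n * n + 1)).i1 m)
        _ = n * n := by simp [Finset.sum_const, mul_comm]
    omega

lemma iter_ge_run (P : Profile n) {j : ℕ} (hj : n * n + 1 ≤ j) :
    iter P j = iter P (n * n + 1) :=
  sel_none_frozen P hj (sel_run_none P)

lemma sel_some_lt_run (P : Profile n) {k : ℕ} {m : Fin n} (h : sel (iter P k) = some m) :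
    k < n * n + 1 := by
  by_contra hc
  rw [iter_ge_run P (by omega)] at h
  rw [sel_run_none P] at h
  cases h

end GS3
section GS4
variable {n : ℕ}

lemma run_inv (P : Profile n) : GSInv P (GSrun P) := by
  rw [GSrun_eq_iter]; exact inv_iter P _

lemma run_matched (P : Profile n) (w : Fin n) : ∃ m, (GSrun P).wmatch w = some m := by
  by_contra hc
  push_neg at hc
  have hnone : (GSrun P).wmatch w = none := by
    rcases h : (GSrun P).wmatch w with _ | m
    · rfl
    · exact absurd h (hc m)
  -- every man is matched
  have hall : ∀ m : Fin n, ∃ w', (GSrun P).wmatch w' = some m := by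
    intro m
    by_contra hm
    push_neg at hm
    have hsel := sel_run_none P
    rw [← GSrun_eq_iter] at hsel
    have := sel_none_spec hsel m
    have hn : (GSrun P).next m = n := by
      have h1 := (run_inv P).i1 m
      rcases Nat.lt_or_ge ((GSrun P).next m) n with h2 | h2
      · exact absurd ⟨fun w' => hm w', h2⟩ this
      · omega
    have hrank : ((P.M m).symm w : ℕ) < (GSrun P).next m := by
      rw [hn]; exact (((P.M m).symm w)).isLt
    rcases (run_inv P).i4 m w hrank with h' | ⟨m', h', -⟩
    · rw [h'] at hnone; cases hnone
    · rw [h'] at hnone; cases hnone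
  choose f hf using hall
  have hinj : Function.Injective f := by
    intro m1 m2 he
    have h1 := hf m1
    rw [he] at h1
    have h2 := hf m2
    rw [h1] at h2
    injection h2
  have hsurj := Finite.surjective_of_injective hinj
  obtain ⟨m, hm⟩ := hsurj w
  exact hc m (hm ▸ hf m)

lemma DA_spec (P : Profile n) (m : Fin n) : (GSrun P).wmatch (DA P m) = some m := by
  have hex : ∃ w, (GSrun P).wmatch w = some m := by
    choose f hf using run_matched P
    have hinj : Function.Injective f := by
      intro w1 w2 he
      apply (run_inv P).i3 _ _ (f w1) (hf w1)
      rw [he]; exact hf w2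
    obtain ⟨w, hw⟩ := Finite.surjective_of_injective hinj m
    exact ⟨w, by rw [hf w, hw]⟩
  rw [DA, dif_pos hex]
  exact hex.choose_spec

lemma DA_eq_iff (P : Profile n) {m w : Fin n} : DA P m = w ↔ (GSrun P).wmatch w = some m := by
  constructor
  · rintro rfl; exact DA_spec P m
  · intro h; exact ((run_inv P).i3 _ _ _ (DA_spec P m) h)

lemma DA_bijective (P : Profile n) : Function.Bijective (DA P) := by
  constructor
  · intro m1 m2 he
    have h1 := DA_spec P m1
    rw [he] at h1
    have h2 := DA_spec P m2
    rw [h1] at h2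
    injection h2
  · intro w
    obtain ⟨m, hm⟩ := run_matched P w
    exact ⟨m, (DA_eq_iff P).mpr hm⟩

lemma DA_rank_lt (P : Profile n) (m : Fin n) :
    ((P.M m).symm (DA P m) : ℕ) < (GSrun P).next m :=
  (run_inv P).i2 _ m (DA_spec P m)

lemma DA_stable (P : Profile n) : Stable P (DA P) := by
  refine ⟨DA_bijective P, ?_⟩
  rintro m w ⟨hmp, m', hm', hwp⟩
  have hrank : ((P.M m).symm w : ℕ) < (GSrun P).next m :=
    lt_of_lt_of_le (Fin.lt_def.mp hmp) (le_of_lt (DA_rank_lt P m))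
  rcases (run_inv P).i4 m w hrank with h' | ⟨m₁, h₁, hlt⟩
  · have : DA P m = w := (DA_eq_iff P).mpr h'
    rw [this] at hmp
    exact absurd hmp (lt_irrefl _)
  · have h2 : (GSrun P).wmatch w = some m' := (DA_eq_iff P).mp hm'
    rw [h₁] at h2
    obtain rfl : m₁ = m' := by injection h2
    exact absurd (lt_trans hlt hwp) (lt_irrefl _)

lemma DA_optimal (P : Profile n) {ν : Fin n → Fin n} (hν : Stable P ν) (m : Fin n) :
    ¬ P.mpref m (ν m) (DA P m) := by
  intro hmp
  have hrank : ((P.M m).symm (ν m) : ℕ) < (GSrun P).next m :=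
    lt_of_lt_of_le (Fin.lt_def.mp hmp) (le_of_lt (DA_rank_lt P m))
  have := (run_inv P).i5 ν hν m hrank
  have heq : DA P m = ν m := (DA_eq_iff P).mpr this
  rw [heq] at hmp
  exact absurd hmp (lt_irrefl _)

end GS4
section GS5
variable {n : ℕ}

lemma eq_of_rank (e : Fin n ≃ Fin n) {x y : Fin n} (h : (e.symm x : ℕ) = (e.symm y : ℕ)) :
    x = y := by
  have : e.symm x = e.symm y := Fin.ext h
  have := congrArg e this
  rwa [Equiv.apply_symm_apply, Equiv.apply_symm_apply] at this

lemma next_succ_of_sel (P : Profile n) {k : ℕ} {m : Fin n} (hsel : sel (iter P k) = some m) :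
    (iter P (k+1)).next m = (iter P k).next m + 1 := by
  rcases step_cases P (iter P k) with ⟨hnone, -⟩ | ⟨m₁, h, hsel', -, hnext, -⟩
  · rw [hnone] at hsel; cases hsel
  · rw [hsel'] at hsel
    obtain rfl : m₁ = m := by injection hsel
    rw [iter_succ, hnext, Function.update_self]

lemma proposal_matched (P : Profile n) {k : ℕ} {m w : Fin n} (hsel : sel (iter P k) = some m)
    (hw : ((P.M m).symm w : ℕ) = (iter P k).next m) :
    ∃ m', (iter P (k+1)).wmatch w = some m' := by
  rcases step_cases P (iter P k) with ⟨hnone, -⟩ | ⟨m₁, h, hsel', -, -, hcase⟩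
  · rw [hnone] at hsel; cases hsel
  · rw [hsel'] at hsel
    have heq : m₁ = m := by injection hsel
    subst heq
    have hww : P.M m₁ ⟨(iter P k).next m₁, h⟩ = w := by
      apply eq_of_rank (P.M m₁)
      rw [hw, Equiv.symm_apply_apply]
    rw [iter_succ]
    rcases hcase with ⟨m', h1, -, heqw⟩ | ⟨-, heqw⟩
    · rw [heqw, ← hww]; exact ⟨m', h1⟩
    · rw [heqw, ← hww]; exact ⟨m₁, by simp⟩

end GS5
section GS6
variable {n : ℕ}

open Classical in
/-- The Gale–Sotomayor blocking lemma. -/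
lemma blocking_lemma (P : Profile n) (ρ : Fin n → Fin n) (hρ : Function.Bijective ρ)
    (hne : ∃ m, P.mpref m (ρ m) (DA P m)) :
    ∃ m₀ w₀, ¬ P.mpref m₀ (ρ m₀) (DA P m₀) ∧ Blocks P ρ m₀ w₀ := by
  set M' : Set (Fin n) := {m | P.mpref m (ρ m) (DA P m)} with hM'
  set W' : Set (Fin n) := ρ '' M' with hW'
  by_cases hsub : W' ⊆ DA P '' M'
  case neg =>
    -- combinatorial case
    obtain ⟨w, hwW, hwnot⟩ := Set.not_subset.mp hsub
    obtain ⟨m₁, hm₁, hρm₁⟩ := hwW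
    obtain ⟨m₂, hm₂⟩ := (DA_bijective P).surjective w
    have hm₂M : m₂ ∉ M' := fun hc => hwnot ⟨m₂, hc, hm₂⟩
    have hm₂m₁ : m₂ ≠ m₁ := by
      rintro rfl
      have h1 : P.mpref m₂ (ρ m₂) (DA P m₂) := hm₁
      rw [hm₂, hρm₁] at h1
      exact absurd h1 (lt_irrefl _)
    have hnotblock := (DA_stable P).2 m₁ w
    have hmp₁ : P.mpref m₁ w (DA P m₁) := hρm₁ ▸ hm₁
    have hwp : P.wpref w m₂ m₁ := by
      rcases lt_trichotomy ((P.W w).symm m₂) ((P.W w).symm m₁) with h' | h' | h'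
      · exact h'
      · exact absurd ((P.W w).symm.injective h') hm₂m₁
      · exact absurd ⟨hmp₁, m₂, hm₂, h'⟩ hnotblock
    refine ⟨m₂, w, hm₂M, ?_, m₁, hρm₁, hwp⟩
    · -- m₂ prefers w to ρ m₂
      have h1 : ¬ P.mpref m₂ (ρ m₂) (DA P m₂) := hm₂M
      rw [hm₂] at h1
      have h2 : ρ m₂ ≠ w := fun hc => hm₂m₁ (hρ.injective (hc.trans hρm₁.symm))
      rcases lt_trichotomy ((P.M m₂).symm w) ((P.M m₂).symm (ρ m₂)) with h' | h' | h'
      · exact h'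
      · exact absurd ((P.M m₂).symm.injective h').symm h2
      · exact absurd h' h1
  case pos =>
    -- temporal case
    have himg : DA P '' M' = W' := by
      refine (Set.eq_of_subset_of_ncard_le hsub ?_ (Set.toFinite _)).symm
      rw [Set.ncard_image_of_injective M' hρ.injective,
        Set.ncard_image_of_injective M' (DA_bijective P).injective]
    set N := n * n + 1 with hN
    have hrunN : GSrun P = iter P N := GSrun_eq_iter P
    -- the event "some man in M' proposes to some woman in W' at step k"
    set Ev : ℕ → Prop := fun k => ∃ m' w', m' ∈ M' ∧ w' ∈ W' ∧
      sel (iter P k) = some m' ∧ (iter P k).next m' = ((P.M m').symm w' : ℕ) with hEv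
    have hEvlt : ∀ k, Ev k → k < N := by
      rintro k ⟨m', w', -, -, hsel, -⟩
      exact sel_some_lt_run P hsel
    -- each man in M' proposes to his ρ-partner
    have hprop : ∀ m', m' ∈ M' → ∃ k, Ev k ∧ sel (iter P k) = some m' ∧
        (iter P k).next m' = ((P.M m').symm (ρ m') : ℕ) := by
      intro m' hm'
      have hlt : ((P.M m').symm (ρ m') : ℕ) < (iter P N).next m' := by
        refine lt_trans (Fin.lt_def.mp hm') ?_
        rw [← hrunN]; exact DA_rank_lt P m'
      obtain ⟨k, -, hsel, hnext⟩ := prop_step P N m' _ hlt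
      exact ⟨k, ⟨m', ρ m', hm', ⟨m', hm', rfl⟩, hsel, hnext⟩, hsel, hnext⟩
    obtain ⟨ma, hma⟩ := hne
    obtain ⟨ka, hka, -, -⟩ := hprop ma hma
    -- the last such step
    set K : Finset ℕ := (Finset.range N).filter Ev with hK
    have hKne : K.Nonempty :=
      ⟨ka, Finset.mem_filter.mpr ⟨Finset.mem_range.mpr (hEvlt ka hka), hka⟩⟩
    set k₀ := K.max' hKne with hk₀
    have hk₀Ev : Ev k₀ := by
      have := K.max'_mem hKne
      exact (Finset.mem_filter.mp this).2
    have hk₀max : ∀ k, Ev k → k ≤ k₀ := by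
      intro k hk
      exact K.le_max' k (Finset.mem_filter.mpr ⟨Finset.mem_range.mpr (hEvlt k hk), hk⟩)
    have hk₀N : k₀ < N := hEvlt k₀ hk₀Ev
    obtain ⟨m₁, w, hm₁M, hwW, hsel₁, hnext₁⟩ := hk₀Ev
    have hun₁ : ∀ w', (iter P k₀).wmatch w' ≠ some m₁ := (sel_some_spec hsel₁).1
    -- w is m₁'s DA partner
    have hw_eq : DA P m₁ = w := by
      rcases lt_trichotomy ((P.M m₁).symm (DA P m₁) : ℕ) ((iter P k₀).next m₁) with h' | h' | h'
      · exfalso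
        have := rejected_forever P (le_of_lt hk₀N) h' (hun₁ (DA P m₁))
        rw [← hrunN] at this
        exact this (DA_spec P m₁)
      · exact eq_of_rank (P.M m₁) (by rw [h', hnext₁])
      · exfalso
        have hlt : ((P.M m₁).symm (DA P m₁) : ℕ) < (iter P N).next m₁ := by
          rw [← hrunN]; exact DA_rank_lt P m₁
        obtain ⟨k₁, -, hsel₁', hnext₁'⟩ := prop_step P N m₁ _ hlt
        have hEv₁ : Ev k₁ := ⟨m₁, DA P m₁, hm₁M, himg ▸ ⟨m₁, hm₁M, rfl⟩, hsel₁', hnext₁'⟩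
        have hle := next_mono P (hk₀max k₁ hEv₁) m₁
        omega
    have hwN : (iter P N).wmatch w = some m₁ := by
      rw [← hrunN, ← hw_eq]; exact DA_spec P m₁
    -- the ρ-partner of w
    obtain ⟨m₃, hm₃M, hρm₃⟩ := hwW
    have hm₃m₁ : m₃ ≠ m₁ := by
      rintro rfl
      have h1 : P.mpref m₃ (ρ m₃) (DA P m₃) := hm₃M
      rw [hρm₃, hw_eq] at h1
      exact absurd h1 (lt_irrefl _)
    -- m₃ proposed to w before k₀
    obtain ⟨k₃, hEv₃, hsel₃, hnext₃⟩ := by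
      have := hprop m₃ hm₃M
      rwa [hρm₃] at this
    have hk₃ : k₃ < k₀ := by
      rcases lt_or_eq_of_le (hk₀max k₃ hEv₃) with h' | h'
      · exact h'
      · exfalso
        rw [h'] at hsel₃
        rw [hsel₁] at hsel₃
        exact hm₃m₁ (Option.some.inj hsel₃).symm
    -- w is matched at k₀, to some m₀
    obtain ⟨m₀, hm₀⟩ : ∃ m₀, (iter P k₀).wmatch w = some m₀ := by
      have h1 := proposal_matched P hsel₃ hnext₃.symm
      exact matched_persists P (by omega : k₃ + 1 ≤ k₀) h1
    have hm₀m₁ : m₀ ≠ m₁ := fun hc => hun₁ w (hc ▸ hm₀)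
    -- m₃'s rank of w is below next at k₀
    have hrank₃ : ((P.M m₃).symm w : ℕ) < (iter P k₀).next m₃ := by
      have h1 := next_succ_of_sel P hsel₃
      have h2 := next_mono P (by omega : k₃ + 1 ≤ k₀) m₃
      omega
    -- m₀ is not in M'
    have hx₀w : DA P m₀ ≠ w := by
      intro hc
      have hds := DA_spec P m₀
      rw [hrunN, hc, hwN] at hds
      exact hm₀m₁ (Option.some.inj hds).symm
    have hm₀M : m₀ ∉ M' := by
      intro hm₀M
      have hx₀W : DA P m₀ ∈ W' := himg ▸ ⟨m₀, hm₀M, rfl⟩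
      rcases Nat.lt_or_ge ((P.M m₀).symm (DA P m₀) : ℕ) ((iter P k₀).next m₀) with h' | h'
      · by_cases hcase : (iter P k₀).wmatch (DA P m₀) = some m₀
        · exact hx₀w ((inv_iter P k₀).i3 _ _ _ hcase hm₀)
        · have hrej := rejected_forever P (le_of_lt hk₀N) h' hcase
          rw [← hrunN] at hrej
          exact hrej (DA_spec P m₀)
      · have hlt : ((P.M m₀).symm (DA P m₀) : ℕ) < (iter P N).next m₀ := by
          rw [← hrunN]; exact DA_rank_lt P m₀
        obtain ⟨k₂, -, hsel₂, hnext₂⟩ := prop_step P N m₀ _ hlt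
        have hEv₂ : Ev k₂ := ⟨m₀, DA P m₀, hm₀M, hx₀W, hsel₂, hnext₂⟩
        rcases lt_or_eq_of_le (hk₀max k₂ hEv₂) with h'' | h''
        · have h1 := next_succ_of_sel P hsel₂
          have h2 := next_mono P (by omega : k₂ + 1 ≤ k₀) m₀
          omega
        · rw [h''] at hsel₂
          rw [hsel₁] at hsel₂
          exact hm₀m₁ (Option.some.inj hsel₂).symm
    have hm₀m₃ : m₀ ≠ m₃ := fun hc => hm₀M (hc ▸ hm₃M)
    -- w prefers m₀ to m₃
    have hwp : P.wpref w m₀ m₃ := by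
      rcases (inv_iter P k₀).i4 m₃ w hrank₃ with h' | ⟨m', h', hlt⟩
      · exfalso
        rw [h'] at hm₀
        exact hm₀m₃ (Option.some.inj hm₀).symm
      · rw [h'] at hm₀
        exact (Option.some.inj hm₀) ▸ hlt
    -- m₀ prefers w to ρ m₀
    have hrank₀ : ((P.M m₀).symm w : ℕ) < (iter P k₀).next m₀ := (inv_iter P k₀).i2 w m₀ hm₀
    have hwlt : ((P.M m₀).symm w : ℕ) < ((P.M m₀).symm (DA P m₀) : ℕ) := by
      rcases lt_trichotomy ((P.M m₀).symm (DA P m₀) : ℕ) ((P.M m₀).symm w : ℕ) with h' | h' | h'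
      · exfalso
        have h'' : ((P.M m₀).symm (DA P m₀) : ℕ) < (iter P k₀).next m₀ := by omega
        by_cases hcase : (iter P k₀).wmatch (DA P m₀) = some m₀
        · exact hx₀w ((inv_iter P k₀).i3 _ _ _ hcase hm₀)
        · have hrej := rejected_forever P (le_of_lt hk₀N) h'' hcase
          rw [← hrunN] at hrej
          exact hrej (DA_spec P m₀)
      · exact absurd (eq_of_rank (P.M m₀) h') hx₀w
      · exact h'
    have hmpρ : ¬ ((P.M m₀).symm (ρ m₀) : ℕ) < ((P.M m₀).symm (DA P m₀) : ℕ) :=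
      fun hc => hm₀M (Fin.lt_def.mpr hc)
    have hfin : ((P.M m₀).symm w : ℕ) < ((P.M m₀).symm (ρ m₀) : ℕ) := by omega
    exact ⟨m₀, w, hm₀M, ⟨Fin.lt_def.mpr hfin, m₃, hρm₃, hwp⟩⟩
end GS6
section Main
variable {n : ℕ}

lemma updateM_M_same (P : Profile n) (m : Fin n) (e : Fin n ≃ Fin n) :
    (P.updateM m e).M m = e := by
  simp [Profile.updateM]

lemma updateM_M_ne (P : Profile n) {m m₀ : Fin n} (e : Fin n ≃ Fin n) (h : m₀ ≠ m) :
    (P.updateM m e).M m₀ = P.M m₀ := by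
  simp [Profile.updateM, Function.update_of_ne h]

lemma blocks_updateM (P : Profile n) {m m₀ : Fin n} (e : Fin n ≃ Fin n) (h : m₀ ≠ m)
    (ρ : Fin n → Fin n) (w : Fin n) :
    Blocks (P.updateM m e) ρ m₀ w ↔ Blocks P ρ m₀ w := by
  unfold Blocks Profile.mpref Profile.wpref
  rw [updateM_M_ne P e h]
  constructor
  · rintro ⟨h1, m', h2, h3⟩; exact ⟨h1, m', h2, h3⟩
  · rintro ⟨h1, m', h2, h3⟩; exact ⟨h1, m', h2, h3⟩
end Main

theorem pushUp_subset_WNR_noRegret' (n : ℕ) (P : Profile n) (m : Fin n)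
    (Y : Set (Fin n)) (hY : Y ⊆ WNR P m)
    (eY : Fin n ≃ Fin n) (hpu : PushUp P m Y eY) :
    DA (P.updateM m eY) m = DA P m := by
  rcases n with _ | n₀
  · exact m.elim0
  have hAb : Above eY (DA P m) = Above (P.M m) (DA P m) ∪ Y := by
    have h := hpu
    unfold PushUp PushUpDown at h
    rwa [Set.diff_empty] at h
  have hP'W : (P.updateM m eY).W = P.W := rfl
  have hPM' : (P.updateM m eY).M m = eY := updateM_M_same P m eY
  rcases lt_trichotomy (eY.symm (DA (P.updateM m eY) m)) (eY.symm (DA P m)) with hlt | heq | hgt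
  · -- the manipulated partner is above the true partner in eY
    have hmem : DA (P.updateM m eY) m ∈ Above eY (DA P m) := hlt
    rw [hAb] at hmem
    rcases hmem with hmemA | hmemY
    · -- strictly better in the true preferences : contradicts the blocking lemma
      exfalso
      have hmp : P.mpref m (DA (P.updateM m eY) m) (DA P m) := hmemA
      obtain ⟨m₀, w₀, hm₀, hblk⟩ :=
        blocking_lemma P (DA (P.updateM m eY)) (DA_bijective (P.updateM m eY)) ⟨m, hmp⟩
      have hm₀m : m₀ ≠ m := fun hc => hm₀ (by rw [hc]; exact hmp)
      exact (DA_stable (P.updateM m eY)).2 m₀ w₀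
        ((blocks_updateM P eY hm₀m (DA (P.updateM m eY)) w₀).mpr hblk)
    · -- partner in Y : use the no-regret hypothesis through the "top push" profile
      exfalso
      obtain ⟨hbelow, hnr⟩ := hY hmemY
      have hrt : (P.M m).symm (DA P m) < (P.M m).symm (DA (P.updateM m eY) m) := hbelow
      set t : Fin (n₀ + 1) := (P.M m).symm (DA (P.updateM m eY) m) with ht
      set r : Fin (n₀ + 1) := (P.M m).symm (DA P m) with hr
      set e'' : Fin (n₀ + 1) ≃ Fin (n₀ + 1) := Equiv.trans (Equiv.symm (Fin.cycleRange t)) (P.M m) with he''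
      have hesymm : ∀ x : Fin (n₀ + 1), e''.symm x = Fin.cycleRange t ((P.M m).symm x) :=
        fun x => rfl
      have h0 : e''.symm (DA (P.updateM m eY) m) = 0 := by
        rw [hesymm, ← ht, Fin.cycleRange_self]
      have h1 : (e''.symm (DA P m) : ℕ) = (r : ℕ) + 1 := by
        rw [hesymm, ← hr, Fin.coe_cycleRange_of_lt hrt]
      have hpu'' : PushUp P m {DA (P.updateM m eY) m} e'' := by
        unfold PushUp PushUpDown
        rw [Set.diff_empty]
        ext x
        simp only [Above, Set.mem_setOf_eq, Set.mem_union, Set.mem_singleton_iff]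
        have hx : e''.symm x = Fin.cycleRange t ((P.M m).symm x) := hesymm x
        have hEq : (x = DA (P.updateM m eY) m) ↔ ((P.M m).symm x = t) := by
          constructor
          · rintro rfl; rw [ht]
          · intro h; rw [ht] at h; exact (P.M m).symm.injective h
        rcases lt_trichotomy ((P.M m).symm x) t with hu | hu | hu
        · have hval : (e''.symm x : ℕ) = ((P.M m).symm x : ℕ) + 1 := by
            rw [hx, Fin.coe_cycleRange_of_lt hu]
          constructor
          · intro hlt'
            left
            have := Fin.lt_def.mp hlt'
            rw [hval, h1] at this
            exact Fin.lt_def.mpr (by omega)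
          · intro hor
            rcases hor with hor | hor
            · have := Fin.lt_def.mp hor
              exact Fin.lt_def.mpr (by rw [hval, h1]; omega)
            · exact absurd (hEq.mp hor) (by intro hc; rw [hc] at hu; exact lt_irrefl _ hu)
        · constructor
          · intro _; right; exact hEq.mpr hu
          · intro _
            refine Fin.lt_def.mpr ?_
            rw [hx, hu, Fin.cycleRange_self, h1]
            simp
        · have hval : (e''.symm x : ℕ) = ((P.M m).symm x : ℕ) := by
            rw [hx, Fin.cycleRange_of_gt hu]
          have hrtval : (r : ℕ) < (t : ℕ) := Fin.lt_def.mp hrt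
          have huval : (t : ℕ) < ((P.M m).symm x : ℕ) := Fin.lt_def.mp hu
          constructor
          · intro hlt'
            have := Fin.lt_def.mp hlt'
            rw [hval, h1] at this
            omega
          · intro hor
            rcases hor with hor | hor
            · have := Fin.lt_def.mp hor
              rw [← hr] at this
              omega
            · have := hEq.mp hor
              rw [this] at hu
              exact absurd hu (lt_irrefl _)
      have hDAQ : DA (P.updateM m e'') m = DA P m := hnr e'' hpu''
      have hstab : Stable (P.updateM m e'') (DA (P.updateM m eY)) := by
        refine ⟨DA_bijective (P.updateM m eY), ?_⟩
        rintro m₁ w₁ hblk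
        by_cases hm₁ : m₁ = m
        · subst hm₁
          obtain ⟨hmp₁, -⟩ := hblk
          have : ((P.updateM m₁ e'').M m₁).symm w₁ < ((P.updateM m₁ e'').M m₁).symm (DA (P.updateM m₁ eY) m₁) := hmp₁
          rw [updateM_M_same, h0] at this
          exact absurd this (Fin.not_lt_zero _)
        · exact (DA_stable (P.updateM m eY)).2 m₁ w₁
            ((blocks_updateM P eY hm₁ _ w₁).mpr
              ((blocks_updateM P e'' hm₁ _ w₁).mp hblk))
      have hopt := DA_optimal (P.updateM m e'') hstab m
      apply hopt
      show ((P.updateM m e'').M m).symm (DA (P.updateM m eY) m)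
          < ((P.updateM m e'').M m).symm (DA (P.updateM m e'') m)
      rw [updateM_M_same, hDAQ, h0]
      exact Fin.lt_def.mpr (by rw [h1]; simp)
  · -- equal rank : equal partner
    exact eY.symm.injective heq
  · -- the manipulated partner is below : contradicts the blocking lemma on P'
    exfalso
    have hmp : (P.updateM m eY).mpref m (DA P m) (DA (P.updateM m eY) m) := by
      show ((P.updateM m eY).M m).symm (DA P m) < ((P.updateM m eY).M m).symm (DA (P.updateM m eY) m)
      rw [hPM']
      exact hgt
    obtain ⟨m₀, w₀, hm₀, hblk⟩ :=
      blocking_lemma (P.updateM m eY) (DA P) (DA_bijective P) ⟨m, hmp⟩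
    have hm₀m : m₀ ≠ m := fun hc => hm₀ (by rw [hc]; exact hmp)
    exact (DA_stable P).2 m₀ w₀ ((blocks_updateM P eY hm₀m (DA P) w₀).mp hblk)

/-- Pushing up any subset `Y` of the no-regret set `W^NR`
simultaneously causes no regret for `m`. -/
theorem pushUp_subset_WNR_noRegret (n : ℕ) (P : Profile n) (m : Fin n)
    (Y : Set (Fin n)) (hY : Y ⊆ WNR P m)
    (eY : Fin n ≃ Fin n) (hpu : PushUp P m Y eY) :
    DA (P.updateM m eY) m = DA P m :=
  pushUp_subset_WNR_noRegret' n P m Y hY eY hpu
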